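/- Under the same setting, f₂(x⁺) ≥ f₂(x) + (α/2) sin²(Δ + φ) ‖∇f₂(x)‖² whenever α ≤ 1/L; hence the currently optimized objective strictly increases unless ∇f₂(x) = 0 or Δ + φ = π. -/

import Mathlib

open Real RealInnerProductSpace InnerProductGeometry

lemma descent_aux {n : ℕ} (f : EuclideanSpace ℝ (Fin n) → ℝ) (L : ℝ) (hL : 0 ≤ L)
    (hdiff : Differentiable ℝ f)
    (hLip : ∀ y z, ‖gradient f y - gradient f z‖ ≤ L * ‖y - z‖)
    (x v : EuclideanSpace ℝ (Fin n)) :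
    f (x + v) ≥ f x + ⟪gradient f x, v⟫ - L / 2 * ‖v‖ ^ 2 := by
  set h : ℝ → ℝ := fun t => f (x + t • v) - t * ⟪gradient f x, v⟫ + L * t ^ 2 / 2 * ‖v‖ ^ 2 with hh
  have hd : ∀ t : ℝ, HasDerivAt h
      (⟪gradient f (x + t • v), v⟫ - ⟪gradient f x, v⟫ + L * t * ‖v‖ ^ 2) t := by
    intro t
    have hc : HasDerivAt (fun t : ℝ => x + t • v) v t := by
      simpa using ((hasDerivAt_id t).smul_const v).const_add x
    have hf : HasFDerivAt f (InnerProductSpace.toDual ℝ _ (gradient f (x + t • v))) (x + t • v) :=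
      (hdiff (x + t • v)).hasGradientAt.hasFDerivAt
    have h1 : HasDerivAt (fun t : ℝ => f (x + t • v)) (⟪gradient f (x + t • v), v⟫) t := by
      exact (hf.comp_hasDerivAt t hc).congr_deriv (by rw [InnerProductSpace.toDual_apply_apply])
    have h2 : HasDerivAt (fun t : ℝ => t * ⟪gradient f x, v⟫) (⟪gradient f x, v⟫) t := by
      simpa using (hasDerivAt_id t).mul_const _
    have h3 : HasDerivAt (fun t : ℝ => L * t ^ 2 / 2 * ‖v‖ ^ 2) (L * t * ‖v‖ ^ 2) t := by
      have : HasDerivAt (fun t : ℝ => t ^ 2) (2 * t) t := by simpa using hasDerivAt_pow 2 t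
      have := ((this.const_mul L).div_const 2).mul_const (‖v‖ ^ 2)
      exact this.congr_deriv (by ring)
    exact (h1.sub h2).add h3
  have hmono : MonotoneOn h (Set.Icc 0 1) := by
    apply monotoneOn_of_deriv_nonneg (convex_Icc 0 1)
    · exact (Differentiable.continuous (fun t => (hd t).differentiableAt)).continuousOn
    · intro t ht
      exact (hd t).differentiableAt.differentiableWithinAt
    · intro t ht
      rw [interior_Icc] at ht
      rw [(hd t).deriv]
      have hb : ‖gradient f (x + t • v) - gradient f x‖ ≤ L * (t * ‖v‖) := by
        have := hLip (x + t • v) x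
        simpa [norm_smul, abs_of_nonneg ht.1.le] using this
      have hi : ⟪gradient f (x + t • v) - gradient f x, v⟫ ≥ -(L * (t * ‖v‖) * ‖v‖) := by
        have := abs_real_inner_le_norm (gradient f (x + t • v) - gradient f x) v
        have := neg_abs_le ⟪gradient f (x + t • v) - gradient f x, v⟫
        nlinarith [abs_real_inner_le_norm (gradient f (x + t • v) - gradient f x) v,
          norm_nonneg v, mul_nonneg (mul_nonneg hL ht.1.le) (norm_nonneg v)]
      rw [inner_sub_left] at hi
      nlinarith [sq_nonneg ‖v‖]
  have := hmono (Set.left_mem_Icc.2 zero_le_one) (Set.right_mem_Icc.2 zero_le_one) zero_le_one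
  simp only [hh] at this
  simp only [zero_smul, add_zero, one_smul, zero_mul, one_pow, mul_one] at this
  nlinarith [this]

lemma cone_inner_norm {n : ℕ} (f₁ f₂ : EuclideanSpace ℝ (Fin n) → ℝ)
    (L Δ φ α : ℝ) (x u : EuclideanSpace ℝ (Fin n))
    (hg₁ : gradient f₁ x ≠ 0) (hg₂ : gradient f₂ x ≠ 0)
    (hΔ0 : 0 < Δ) (hΔ1 : Δ < π / 2)
    (hφ : φ = angle (gradient f₁ x) (gradient f₂ x))
    (hφ1 : π / 2 - Δ < φ) (hφ2 : φ < π)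
    (hu : u = ((Real.cos Δ / Real.sin φ) * Real.sin (Δ + φ)) •
      (gradient f₂ x + ((‖gradient f₂ x‖ / ‖gradient f₁ x‖) *
        (Real.sin φ * Real.tan Δ - Real.cos φ)) • gradient f₁ x)) :
    ⟪gradient f₂ x, u⟫ = Real.sin (Δ + φ) ^ 2 * ‖gradient f₂ x‖ ^ 2 ∧
    ‖u‖ ^ 2 = Real.sin (Δ + φ) ^ 2 * ‖gradient f₂ x‖ ^ 2 := by
  set g₁ := gradient f₁ x
  set g₂ := gradient f₂ x
  have hn₁ : ‖g₁‖ ≠ 0 := norm_ne_zero_iff.2 hg₁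
  have hn₂ : ‖g₂‖ ≠ 0 := norm_ne_zero_iff.2 hg₂
  have hs : 0 < Real.sin φ := Real.sin_pos_of_pos_of_lt_pi (by linarith) hφ2
  have hcΔ : 0 < Real.cos Δ := Real.cos_pos_of_mem_Ioo ⟨by linarith [Real.pi_pos], hΔ1⟩
  have hcos : ⟪g₁, g₂⟫ = Real.cos φ * (‖g₁‖ * ‖g₂‖) := by
    rw [hφ]; exact (cos_angle_mul_norm_mul_norm g₁ g₂).symm
  have hcos' : ⟪g₂, g₁⟫ = Real.cos φ * (‖g₁‖ * ‖g₂‖) := by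
    rw [real_inner_comm]; exact hcos
  constructor
  · rw [hu]
    rw [inner_smul_right, inner_add_right, inner_smul_right, real_inner_self_eq_norm_sq, hcos']
    rw [Real.sin_add, Real.tan_eq_sin_div_cos]
    field_simp
    linear_combination (-(Real.sin Δ * Real.cos φ + Real.cos Δ * Real.sin φ) * Real.cos Δ) *
      Real.sin_sq_add_cos_sq φ
  · rw [← real_inner_self_eq_norm_sq, hu]
    rw [inner_smul_right, inner_smul_left, inner_add_right, inner_add_left, inner_add_left,
      inner_smul_right, inner_smul_left, inner_smul_right, inner_smul_left,
      real_inner_self_eq_norm_sq, real_inner_self_eq_norm_sq, hcos, hcos']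
    simp only [RCLike.star_def, conj_trivial]
    rw [Real.sin_add, Real.tan_eq_sin_div_cos]
    field_simp
    linear_combination
      (-(Real.sin Δ * Real.cos φ + Real.cos Δ * Real.sin φ) ^ 2 * Real.cos Δ ^ 2) * Real.sin_sq_add_cos_sq φ
      + ((Real.sin Δ * Real.cos φ + Real.cos Δ * Real.sin φ) ^ 2 * Real.sin φ ^ 2) * Real.sin_sq_add_cos_sq Δ


theorem cone_step_increases_f2 {n : ℕ} (f₁ f₂ : EuclideanSpace ℝ (Fin n) → ℝ)
    (L Δ φ α : ℝ) (x u : EuclideanSpace ℝ (Fin n))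
    (hdiff₂ : Differentiable ℝ f₂)
    (hconc₂ : ConcaveOn ℝ Set.univ f₂)
    (hL₂ : ∀ y z : EuclideanSpace ℝ (Fin n), ‖gradient f₂ y - gradient f₂ z‖ ≤ L * ‖y - z‖)
    (hLpos : 0 < L)
    (hg₁ : gradient f₁ x ≠ 0) (hg₂ : gradient f₂ x ≠ 0)
    (hΔ0 : 0 < Δ) (hΔ1 : Δ < π / 2)
    (hφ : φ = angle (gradient f₁ x) (gradient f₂ x))
    (hφ1 : π / 2 - Δ < φ) (hφ2 : φ < π)
    (hu : u = ((Real.cos Δ / Real.sin φ) * Real.sin (Δ + φ)) •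
      (gradient f₂ x + ((‖gradient f₂ x‖ / ‖gradient f₁ x‖) *
        (Real.sin φ * Real.tan Δ - Real.cos φ)) • gradient f₁ x))
    (hα0 : 0 ≤ α) (hα : α ≤ 1 / L) :
    f₂ (x + α • u) ≥ f₂ x + α / 2 * Real.sin (Δ + φ) ^ 2 * ‖gradient f₂ x‖ ^ 2 ∧
    (0 < α → Δ + φ ≠ π → f₂ (x + α • u) > f₂ x) := by
  obtain ⟨hi, hn⟩ := cone_inner_norm f₁ f₂ L Δ φ α x u hg₁ hg₂ hΔ0 hΔ1 hφ hφ1 hφ2 hu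
  have key := descent_aux f₂ L hLpos.le hdiff₂ hL₂ x (α • u)
  have hiα : ⟪gradient f₂ x, α • u⟫ = α * (Real.sin (Δ + φ) ^ 2 * ‖gradient f₂ x‖ ^ 2) := by
    rw [real_inner_smul_right, hi]
  have hnα : ‖α • u‖ ^ 2 = α ^ 2 * (Real.sin (Δ + φ) ^ 2 * ‖gradient f₂ x‖ ^ 2) := by
    rw [norm_smul, mul_pow, hn]; simp [sq_abs]
  rw [hiα, hnα] at key
  have hLα : L * α ≤ 1 := by
    rw [le_div_iff₀ hLpos] at hα; linarith
  have hS : 0 ≤ Real.sin (Δ + φ) ^ 2 * ‖gradient f₂ x‖ ^ 2 :=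
    mul_nonneg (sq_nonneg _) (sq_nonneg _)
  have main : f₂ (x + α • u) ≥ f₂ x + α / 2 * Real.sin (Δ + φ) ^ 2 * ‖gradient f₂ x‖ ^ 2 := by
    have h1 : α / 2 * Real.sin (Δ + φ) ^ 2 * ‖gradient f₂ x‖ ^ 2 ≤
        α * (Real.sin (Δ + φ) ^ 2 * ‖gradient f₂ x‖ ^ 2)
          - L / 2 * (α ^ 2 * (Real.sin (Δ + φ) ^ 2 * ‖gradient f₂ x‖ ^ 2)) := by
      nlinarith [mul_nonneg hα0 hS]
    linarith
  refine ⟨main, fun hα' hne => ?_⟩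
  have hsin : Real.sin (Δ + φ) ≠ 0 := by
    rcases lt_trichotomy (Δ + φ) π with h | h | h
    · exact ne_of_gt (Real.sin_pos_of_pos_of_lt_pi (by linarith) h)
    · exact absurd h hne
    · have h1 : Real.sin (Δ + φ - π) > 0 :=
        Real.sin_pos_of_pos_of_lt_pi (by linarith) (by linarith)
      rw [Real.sin_sub_pi] at h1
      linarith
  have hpos : 0 < α / 2 * Real.sin (Δ + φ) ^ 2 * ‖gradient f₂ x‖ ^ 2 := by
    have := norm_pos_iff.2 hg₂
    positivity
  linarith
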